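/- Soundness of the (◇ₛ¹) rule: let Γ ⊢ Δ{◇ₛφ}, (s')[Σ] be a nested sequent whose indicated component contains ◇ₛφ and whose consequent contains a nesting (s')[Σ], and suppose s' ≼*_Γ s. If the premise Γ ⊢ Δ{◇ₛφ}, (s')[Σ, φ] (obtained by adding φ to the nesting (s')[Σ]) is valid, then the conclusion Γ ⊢ Δ{◇ₛφ}, (s')[Σ] is valid. -/

import Mathlib

/-- Formulas of propositional standpoint logic in negation normal form,
over propositional variables `P` and standpoint symbols `S`. -/
inductive Fml (P S : Type) : Type
  | atom  : P → Fml P S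
  | natom : P → Fml P S
  | or    : Fml P S → Fml P S → Fml P S
  | and   : Fml P S → Fml P S → Fml P S
  | box   : S → Fml P S → Fml P S
  | dia   : S → Fml P S → Fml P S

/-- A standpoint model over the vocabulary `(P, S)` with distinguished
universal standpoint `star`, whose set of precisifications is `W`. -/
structure Model (P S : Type) (star : S) (W : Type) : Type where
  nonempty : Nonempty W
  sig : S → Set W
  val : P → Set W
  sig_nonempty : ∀ s, (sig s).Nonempty
  sig_star : sig star = Set.univ

/-- Satisfaction of a formula at a precisification of a standpoint model. -/
def sat {P S W : Type} {star : S} (M : Model P S star W) : W → Fml P S → Prop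
  | w, .atom p  => w ∈ M.val p
  | w, .natom p => w ∉ M.val p
  | w, .or φ ψ  => sat M w φ ∨ sat M w ψ
  | w, .and φ ψ => sat M w φ ∧ sat M w ψ
  | _, .box s φ => ∀ v ∈ M.sig s, sat M v φ
  | _, .dia s φ => ∃ v ∈ M.sig s, sat M v φ

/-- `M` satisfies every sharpening statement `s ≼ s'` in `Γ`
(this does not depend on the precisification). -/
def satSharp {P S W : Type} {star : S} (M : Model P S star W) (Γ : Set (S × S)) : Prop :=
  ∀ q ∈ Γ, M.sig q.1 ⊆ M.sig q.2

/-- `SpRel star Γ s s'` is `s ≼*_Γ s'`: the least reflexive-transitive relation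
containing all pairs of `Γ` and relating every standpoint to `star`. -/
inductive SpRel {S : Type} (star : S) (Γ : Set (S × S)) : S → S → Prop
  | base {s s'} : (s, s') ∈ Γ → SpRel star Γ s s'
  | toStar (s) : SpRel star Γ s star
  | refl (s) : SpRel star Γ s s
  | trans {s t u} : SpRel star Γ s t → SpRel star Γ t u → SpRel star Γ s u

/-- Satisfaction at `w` of the formula interpretation
`ι(Γ ⊢ Σ₀, (s₁)[Σ₁], …, (sₙ)[Σₙ]) = ⋀Γ → ⋁Σ₀ ∨ ⋁ᵢ ◻_{sᵢ}(⋁Σᵢ)`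
of the nested sequent with antecedent `Γ`, root component `root = Σ₀`
and nestings `nest = [(s₁, Σ₁), …, (sₙ, Σₙ)]`. -/
def satSeq {P S W : Type} {star : S} (M : Model P S star W) (w : W)
    (Γ : Set (S × S)) (root : Multiset (Fml P S))
    (nest : List (S × Multiset (Fml P S))) : Prop :=
  satSharp M Γ →
    (∃ φ ∈ root, sat M w φ) ∨ ∃ e ∈ nest, ∀ v ∈ M.sig e.1, ∃ φ ∈ e.2, sat M v φ

/-- Validity of a nested sequent: its formula interpretation holds at every
precisification of every standpoint model. -/
def ValidSeq {P S : Type} (star : S) (Γ : Set (S × S))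
    (root : Multiset (Fml P S)) (nest : List (S × Multiset (Fml P S))) : Prop :=
  ∀ (W : Type) (M : Model P S star W) (w : W), satSeq M w Γ root nest


lemma SpRel.subset {P S W : Type} {star : S} {Γ : Set (S × S)} (M : Model P S star W)
    (hΓ : satSharp M Γ) {a b : S} (h : SpRel star Γ a b) : M.sig a ⊆ M.sig b := by
  induction h with
  | base hm => exact hΓ _ hm
  | toStar s => simp [M.sig_star]
  | refl s => exact subset_rfl
  | trans _ _ ih1 ih2 => exact ih1.trans ih2

/-- Soundness of the `(◇ₛ¹)` rule: if `◇ₛφ` occurs in a component of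
`Γ ⊢ Δ{◇ₛφ}, (s')[Θ]`, `s' ≼*_Γ s`, and the premise obtained by adding `φ`
to the nesting `(s')[Θ]` is valid, then the conclusion is valid. -/
theorem stmt3 {P S : Type} (star : S) (Γ : Set (S × S)) (s s' : S) (φ : Fml P S)
    (root Θ : Multiset (Fml P S)) (l₁ l₂ : List (S × Multiset (Fml P S)))
    (hmem : Fml.dia s φ ∈ root ∨ ∃ e ∈ l₁ ++ l₂, Fml.dia s φ ∈ e.2)
    (hrel : SpRel star Γ s' s)
    (hprem : ValidSeq star Γ root (l₁ ++ (s', φ ::ₘ Θ) :: l₂)) :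
    ValidSeq star Γ root (l₁ ++ (s', Θ) :: l₂) := by
  intro W M w hΓ
  have hsub : M.sig s' ⊆ M.sig s := SpRel.subset M hΓ hrel
  rcases hprem W M w hΓ with h | ⟨e, he, hsat⟩
  · exact Or.inl h
  rw [List.mem_append, List.mem_cons] at he
  rcases he with he | he | he
  · exact Or.inr ⟨e, List.mem_append.mpr (Or.inl he), hsat⟩
  case inr.inr.inr =>
    exact Or.inr ⟨e, List.mem_append.mpr (Or.inr (List.mem_cons_of_mem _ he)), hsat⟩
  subst he
  by_cases hΘ : ∀ v ∈ M.sig s', ∃ ψ ∈ Θ, sat M v ψ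
  · exact Or.inr ⟨(s', Θ), List.mem_append.mpr (Or.inr List.mem_cons_self), hΘ⟩
  push_neg at hΘ
  obtain ⟨v, hv, hvΘ⟩ := hΘ
  obtain ⟨ψ, hψ, hsψ⟩ := hsat v hv
  rw [Multiset.mem_cons] at hψ
  rcases hψ with rfl | hψ
  · have hdia : ∀ u : W, sat M u (Fml.dia s ψ) := fun _ => ⟨v, hsub hv, hsψ⟩
    rcases hmem with hm | ⟨e, he, hmem⟩
    · exact Or.inl ⟨_, hm, hdia w⟩
    · refine Or.inr ⟨e, ?_, fun u hu => ⟨_, hmem, hdia u⟩⟩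
      rcases List.mem_append.mp he with h | h
      · exact List.mem_append.mpr (Or.inl h)
      · exact List.mem_append.mpr (Or.inr (List.mem_cons_of_mem _ h))
  · exact absurd hsψ (hvΘ ψ hψ)
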